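/- For M = [[1,2],[2,1]] and the path q̄_a(λ) = (1−λ)·(−4,0) + λ·(0,−4), λ ∈ [0,1]: the equation f_M(x) = q̄_a(λ) has exactly one solution for λ ∈ [0,1/3), exactly three solutions for λ ∈ (1/3, 2/3), and exactly one solution for λ ∈ (2/3, 1]. -/
import Mathlib


open Matrix

/-- Complementary matrix `C_M(α)`: j-th column is `-M_{·j}` if `j ∈ α`, else `e_j`. -/
def compMat {n : ℕ} (M : Matrix (Fin n) (Fin n) ℝ) (α : Finset (Fin n)) :
    Matrix (Fin n) (Fin n) ℝ :=
  fun i j => if j ∈ α then -M i j else (if i = j then 1 else 0)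

/-- The orthant `pos C_I(α)`: `x_j ≤ 0` for `j ∈ α`, `x_j ≥ 0` otherwise. -/
def orthant {n : ℕ} (α : Finset (Fin n)) : Set (Fin n → ℝ) :=
  {x | ∀ j, if j ∈ α then x j ≤ 0 else 0 ≤ x j}

/-- The cone generated by the columns of `A`. -/
def posCone {n : ℕ} (A : Matrix (Fin n) (Fin n) ℝ) : Set (Fin n → ℝ) :=
  {q | ∃ p : Fin n → ℝ, (∀ j, 0 ≤ p j) ∧ q = A.mulVec p}

/-- The piecewise linear map `f_M`, in closed form: on the orthant
`pos C_I(α)` this map equals `x ↦ C_{-M}(α) x`. -/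
def fpl {n : ℕ} (M : Matrix (Fin n) (Fin n) ℝ) (x : Fin n → ℝ) : Fin n → ℝ :=
  fun i => max (x i) 0 - M.mulVec (fun j => max (-x j) 0) i

/-- `z` solves the LCP `(M, q)`: with `w = Mz + q`, one has `z ≥ 0`, `w ≥ 0`, `wᵀz = 0`. -/
def isLCPsol {ι : Type*} [Fintype ι] (M : Matrix ι ι ℝ) (q z : ι → ℝ) : Prop :=
  (∀ i, 0 ≤ z i) ∧ (∀ i, 0 ≤ (M.mulVec z + q) i) ∧ (∀ i, (M.mulVec z + q) i * z i = 0)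

lemma sol_iff (l : ℝ) (x : Fin 2 → ℝ) :
    fpl !![1, 2; 2, 1] x = ![4*l - 4, -4*l] ↔
    (max (x 0) 0 - (max (-x 0) 0 + 2 * max (-x 1) 0) = 4*l - 4 ∧
     max (x 1) 0 - (2 * max (-x 0) 0 + max (-x 1) 0) = -4*l) := by
  rw [funext_iff, Fin.forall_fin_two]
  simp [fpl, Matrix.mulVec, dotProduct, Fin.sum_univ_two]

lemma sol_char (l : ℝ) (hl0 : 0 ≤ l) (hl1 : l ≤ 1) (x : Fin 2 → ℝ) :
    fpl !![1, 2; 2, 1] x = ![4*l - 4, -4*l] ↔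
    ((1/3 ≤ l ∧ x = ![12*l - 4, -4*l]) ∨ (l ≤ 2/3 ∧ x = ![4*l - 4, 8 - 12*l]) ∨
     (1/3 ≤ l ∧ l ≤ 2/3 ∧ x = ![4/3 - 4*l, 4*l - 8/3])) := by
  rw [sol_iff]
  constructor
  · rintro ⟨h1, h2⟩
    rcases le_total 0 (x 0) with p0 | p0 <;> rcases le_total 0 (x 1) with p1 | p1
    · simp only [max_eq_left p0, max_eq_left p1, max_eq_right (neg_nonpos.mpr p0),
        max_eq_right (neg_nonpos.mpr p1)] at h1 h2
      exfalso; linarith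
    · simp only [max_eq_left p0, max_eq_right p1, max_eq_right (neg_nonpos.mpr p0),
        max_eq_left (neg_nonneg.mpr p1)] at h1 h2
      refine Or.inl ⟨by linarith, funext fun i => ?_⟩
      fin_cases i <;> simp <;> linarith
    · simp only [max_eq_right p0, max_eq_left p1, max_eq_left (neg_nonneg.mpr p0),
        max_eq_right (neg_nonpos.mpr p1)] at h1 h2
      refine Or.inr (Or.inl ⟨by linarith, funext fun i => ?_⟩)
      fin_cases i <;> simp <;> linarith
    · simp only [max_eq_right p0, max_eq_right p1, max_eq_left (neg_nonneg.mpr p0),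
        max_eq_left (neg_nonneg.mpr p1)] at h1 h2
      refine Or.inr (Or.inr ⟨by linarith, by linarith, funext fun i => ?_⟩)
      fin_cases i <;> simp <;> linarith
  · rintro (⟨h, rfl⟩ | ⟨h, rfl⟩ | ⟨h, h', rfl⟩) <;>
      simp only [Matrix.cons_val_zero, Matrix.cons_val_one, Matrix.head_cons]
    · rw [max_eq_left (by linarith), max_eq_right (by linarith), max_eq_left (by linarith),
        max_eq_right (by linarith)]
      constructor <;> ring
    · rw [max_eq_right (by linarith), max_eq_left (by linarith), max_eq_right (by linarith),
        max_eq_left (by linarith)]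
      constructor <;> ring
    · rw [max_eq_right (by linarith), max_eq_left (by linarith), max_eq_left (by linarith),
        max_eq_right (by linarith)]
      constructor <;> ring

lemma vne {a b c d : ℝ} (h : a ≠ c) : (![a,b] : Fin 2 → ℝ) ≠ ![c,d] :=
  fun he => h (congrFun he 0)

theorem stmt_8 (l : ℝ) :
    (l ∈ Set.Ico (0:ℝ) (1/3) →
      {x : Fin 2 → ℝ | fpl !![1, 2; 2, 1] x = ![4*l - 4, -4*l]}.encard = 1) ∧
    (l ∈ Set.Ioo (1/3 : ℝ) (2/3) →
      {x : Fin 2 → ℝ | fpl !![1, 2; 2, 1] x = ![4*l - 4, -4*l]}.encard = 3) ∧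
    (l ∈ Set.Ioc (2/3 : ℝ) 1 →
      {x : Fin 2 → ℝ | fpl !![1, 2; 2, 1] x = ![4*l - 4, -4*l]}.encard = 1) := by
  refine ⟨fun ⟨h0, h1⟩ => ?_, fun ⟨h0, h1⟩ => ?_, fun ⟨h0, h1⟩ => ?_⟩
  · have hs : {x : Fin 2 → ℝ | fpl !![1, 2; 2, 1] x = ![4*l - 4, -4*l]}
        = {![4*l - 4, 8 - 12*l]} := by
      ext x
      rw [Set.mem_setOf_eq, sol_char l h0 (by linarith), Set.mem_singleton_iff]
      constructor
      · rintro (⟨h, rfl⟩ | ⟨h, rfl⟩ | ⟨h, h', rfl⟩)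
        · exfalso; linarith
        · rfl
        · exfalso; linarith
      · rintro rfl; exact Or.inr (Or.inl ⟨by linarith, rfl⟩)
    rw [hs, Set.encard_singleton]
  · have hs : {x : Fin 2 → ℝ | fpl !![1, 2; 2, 1] x = ![4*l - 4, -4*l]}
        = {![12*l - 4, -4*l], ![4*l - 4, 8 - 12*l], ![4/3 - 4*l, 4*l - 8/3]} := by
      ext x
      rw [Set.mem_setOf_eq, sol_char l (by linarith) (by linarith)]
      simp only [Set.mem_insert_iff, Set.mem_singleton_iff]
      constructor
      · rintro (⟨h, rfl⟩ | ⟨h, rfl⟩ | ⟨h, h', rfl⟩) <;> tauto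
      · rintro (rfl | rfl | rfl)
        · exact Or.inl ⟨by linarith, rfl⟩
        · exact Or.inr (Or.inl ⟨by linarith, rfl⟩)
        · exact Or.inr (Or.inr ⟨by linarith, by linarith, rfl⟩)
    rw [hs, Set.encard_insert_of_notMem, Set.encard_pair (vne (by intro h; linarith))]
    · rfl
    · rintro (h | h)
      · exact vne (a := 12*l-4) (c := 4*l-4) (by intro h'; linarith) h
      · exact vne (a := 12*l-4) (c := 4/3-4*l) (by intro h'; linarith) h
  · have hs : {x : Fin 2 → ℝ | fpl !![1, 2; 2, 1] x = ![4*l - 4, -4*l]}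
        = {![12*l - 4, -4*l]} := by
      ext x
      rw [Set.mem_setOf_eq, sol_char l (by linarith) h1, Set.mem_singleton_iff]
      constructor
      · rintro (⟨h, rfl⟩ | ⟨h, rfl⟩ | ⟨h, h', rfl⟩)
        · rfl
        · exfalso; linarith
        · exfalso; linarith
      · rintro rfl; exact Or.inl ⟨by linarith, rfl⟩
    rw [hs, Set.encard_singleton]
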